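/- Let B₁, B₂ be d×d matrices with B₁B₂ = 0 = B₂B₁ and let M, R be the associated 2d×2d block matrices. If I + M² and I + R² are invertible, then (B₁ B₂)·(I + M²)⁻¹ = (B₁ B₂)·(I + R²)⁻¹. -/

import Mathlib

open Matrix

theorem stmt_8 {d : ℕ} (B₁ B₂ : Matrix (Fin d) (Fin d) ℝ)
    (hB : B₁ * B₂ = 0) (hB' : B₂ * B₁ = 0)
    (k₁ k₂ ℓ₁ ℓ₂ : ℝ) (hk₁ : k₁ ≠ 0) (hk₂ : k₂ ≠ 0) (hk : k₁ + k₂ ≠ 0)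
    (M R : Matrix (Fin d ⊕ Fin d) (Fin d ⊕ Fin d) ℝ)
    (hM : M = fromBlocks ((ℓ₁/(2*k₁)) • B₁) ((ℓ₁/(k₁+k₂)) • B₂)
                          ((ℓ₂/(k₁+k₂)) • B₁) ((ℓ₂/(2*k₂)) • B₂))
    (hR : R = fromBlocks ((ℓ₁/(2*k₁)) • B₁) 0 0 ((ℓ₂/(2*k₂)) • B₂))
    (hMu : IsUnit (1 + M ^ 2)) (hRu : IsUnit (1 + R ^ 2)) :
    fromCols B₁ B₂ * (1 + M ^ 2)⁻¹ = fromCols B₁ B₂ * (1 + R ^ 2)⁻¹ := by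
  obtain ⟨C, hC⟩ : ∃ C, fromCols B₁ B₂ = C := ⟨_, rfl⟩
  rw [hC]
  -- key block identities
  have h1 : C * M = C * R := by
    rw [← hC, hM, hR, fromCols_mul_fromBlocks, fromCols_mul_fromBlocks]
    simp [Matrix.mul_smul, hB, hB']
  have h2 : M * M = M * R := by
    rw [hM, hR, fromBlocks_multiply, fromBlocks_multiply]
    simp [Matrix.mul_smul, Matrix.smul_mul, hB, hB', smul_smul]
  have h3 : R * M = R * R := by
    rw [hM, hR, fromBlocks_multiply, fromBlocks_multiply]
    simp [Matrix.mul_smul, Matrix.smul_mul, hB, hB', smul_smul]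
  have hYinv : (1 + R ^ 2) * (1 + R ^ 2)⁻¹ = 1 :=
    Matrix.mul_nonsing_inv _ ((Matrix.isUnit_iff_isUnit_det _).mp hRu)
  -- (1+M²)⁻¹ = 1 - M*R*(1+R²)⁻¹
  have hinv : (1 + M ^ 2)⁻¹ = 1 - M * R * (1 + R ^ 2)⁻¹ := by
    have hX : (1 + M ^ 2) * (1 - M * R * (1 + R ^ 2)⁻¹) = 1 := by
      have hMMR : M ^ 2 * (M * R) = M * R * R ^ 2 := by
        calc M ^ 2 * (M * R) = M * R * (M * R) := by rw [sq, h2]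
          _ = M * (R * M) * R := by noncomm_ring
          _ = M * (R * R) * R := by rw [h3]
          _ = M * R * R ^ 2 := by noncomm_ring
      have key : (1 + M ^ 2) * (M * R * (1 + R ^ 2)⁻¹)
          = M * R * ((1 + R ^ 2) * (1 + R ^ 2)⁻¹) := by
        calc (1 + M ^ 2) * (M * R * (1 + R ^ 2)⁻¹)
            = (M * R + M ^ 2 * (M * R)) * (1 + R ^ 2)⁻¹ := by noncomm_ring
          _ = (M * R + M * R * R ^ 2) * (1 + R ^ 2)⁻¹ := by rw [hMMR]
          _ = M * R * ((1 + R ^ 2) * (1 + R ^ 2)⁻¹) := by noncomm_ring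
      rw [mul_sub, mul_one, key, hYinv, mul_one, sq, h2]
      simp
    exact Matrix.inv_eq_right_inv hX
  rw [hinv]
  have hCMR : C * (M * R) = C * R ^ 2 := by
    rw [← Matrix.mul_assoc, h1, sq, Matrix.mul_assoc]
  have hfin : C * ((1 + R ^ 2) * (1 + R ^ 2)⁻¹)
      = C * (1 + R ^ 2)⁻¹ + C * R ^ 2 * (1 + R ^ 2)⁻¹ := by
    rw [add_mul, one_mul, Matrix.mul_add, Matrix.mul_assoc]
  rw [hYinv, Matrix.mul_one] at hfin
  calc C * (1 - M * R * (1 + R ^ 2)⁻¹)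
      = C - C * (M * R) * (1 + R ^ 2)⁻¹ := by
        rw [Matrix.mul_sub, Matrix.mul_one, Matrix.mul_assoc, Matrix.mul_assoc,
          ← Matrix.mul_assoc M R]
    _ = C - C * R ^ 2 * (1 + R ^ 2)⁻¹ := by rw [hCMR]
    _ = C * (1 + R ^ 2)⁻¹ := (eq_sub_of_add_eq hfin.symm).symm
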